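/- Let A₁, A₂, A₃ be dichotomic observables on ℂ^{d₁}, B₁, B₂, B₃ be dichotomic observables on ℂ^{d₂}, and ρ a state on ℂ^{d₁}⊗ℂ^{d₂}. If the quantum Bell value attains the optimum, Re Tr[ℐ ρ] = 6, then Re Tr[((A₁+A₂+A₃)⊗1)² ρ] = 0 and Re Tr[(1⊗(B₁+B₂+B₃))² ρ] = 0; consequently Re Tr[((A_xA_{x'}+A_{x'}A_x)⊗1) ρ] = −1 for all x ≠ x' and Re Tr[(1⊗(B_yB_{y'}+B_{y'}B_y)) ρ] = −1 for all y ≠ y'. -/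

import Mathlib

open Kronecker ComplexOrder Matrix

section kron
variable {l m n p : Type*}

lemma sub_kron (A B : Matrix l m ℂ) (C : Matrix n p ℂ) :
    (A - B) ⊗ₖ C = A ⊗ₖ C - B ⊗ₖ C := by
  ext ⟨i, i'⟩ ⟨j, j'⟩
  simp [Matrix.kroneckerMap_apply, sub_mul]

lemma kron_sub (A : Matrix l m ℂ) (B C : Matrix n p ℂ) :
    A ⊗ₖ (B - C) = A ⊗ₖ B - A ⊗ₖ C := by
  ext ⟨i, i'⟩ ⟨j, j'⟩
  simp [Matrix.kroneckerMap_apply, mul_sub]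

lemma neg_kron (A : Matrix l m ℂ) (C : Matrix n p ℂ) :
    (-A) ⊗ₖ C = -(A ⊗ₖ C) := by
  ext ⟨i, i'⟩ ⟨j, j'⟩
  simp [Matrix.kroneckerMap_apply]

lemma kron_neg (A : Matrix l m ℂ) (C : Matrix n p ℂ) :
    A ⊗ₖ (-C) = -(A ⊗ₖ C) := by
  ext ⟨i, i'⟩ ⟨j, j'⟩
  simp [Matrix.kroneckerMap_apply]

lemma kron_ct (A : Matrix l m ℂ) (B : Matrix n p ℂ) :
    (A ⊗ₖ B)ᴴ = Aᴴ ⊗ₖ Bᴴ := by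
  ext ⟨i, i'⟩ ⟨j, j'⟩
  simp [Matrix.conjTranspose_apply, Matrix.kroneckerMap_apply, mul_comm]

end kron

section pos
variable {n : Type*} [Fintype n] [DecidableEq n]

section sqrtPort
open scoped MatrixOrder

noncomputable def Matrix.PosSemidef.sqrt {A : Matrix n n ℂ} (_ : A.PosSemidef) :
    Matrix n n ℂ := CFC.sqrt A

lemma Matrix.PosSemidef.sqrt_mul_self {A : Matrix n n ℂ} (hA : A.PosSemidef) :
    hA.sqrt * hA.sqrt = A := CFC.sqrt_mul_sqrt_self A hA.nonneg

lemma Matrix.PosSemidef.posSemidef_sqrt {A : Matrix n n ℂ} (hA : A.PosSemidef) :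
    hA.sqrt.PosSemidef := (CFC.sqrt_nonneg A).posSemidef

end sqrtPort

lemma trace_HHρ {H ρ : Matrix n n ℂ} (hH : H.IsHermitian) (hρ : ρ.PosSemidef) :
    (H * H * ρ).trace = ∑ i, ∑ j, ((Complex.normSq ((H * hρ.sqrt) j i)) : ℂ) := by
  have hs := hρ.sqrt_mul_self
  have hsh : hρ.sqrt.IsHermitian := hρ.posSemidef_sqrt.1
  have h1 : H * H * ρ = (H * H * hρ.sqrt) * hρ.sqrt := by
    rw [mul_assoc, mul_assoc, hs, mul_assoc]
  rw [h1, Matrix.trace_mul_comm]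
  have h2 : hρ.sqrt * (H * H * hρ.sqrt) = (H * hρ.sqrt)ᴴ * (H * hρ.sqrt) := by
    rw [Matrix.conjTranspose_mul, hH.eq, hsh.eq, mul_assoc, mul_assoc]
  rw [h2]
  simp only [Matrix.trace, Matrix.diag, Matrix.mul_apply, Matrix.conjTranspose_apply,
    Complex.normSq_eq_conj_mul_self, Complex.star_def]

lemma trace_HHρ_re_nonneg {H ρ : Matrix n n ℂ} (hH : H.IsHermitian) (hρ : ρ.PosSemidef) :
    0 ≤ ((H * H * ρ).trace).re := by
  rw [trace_HHρ hH hρ]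
  simp only [← Complex.ofReal_sum, Complex.ofReal_re]
  exact Finset.sum_nonneg fun i _ => Finset.sum_nonneg fun j _ => Complex.normSq_nonneg _

lemma trace_HHρ_eq_zero {H ρ : Matrix n n ℂ} (hH : H.IsHermitian) (hρ : ρ.PosSemidef)
    (h : ((H * H * ρ).trace).re = 0) : H * ρ = 0 := by
  rw [trace_HHρ hH hρ] at h
  simp only [← Complex.ofReal_sum, Complex.ofReal_re] at h
  have hz : ∀ j i, (H * hρ.sqrt) j i = 0 := by
    intro j i
    have h' : ∀ i ∈ Finset.univ, (0:ℝ) ≤ ∑ j, Complex.normSq ((H * hρ.sqrt) j i) := by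
      intro i _; exact Finset.sum_nonneg fun j _ => Complex.normSq_nonneg _
    have := (Finset.sum_eq_zero_iff_of_nonneg h').mp h i (Finset.mem_univ i)
    have h'' : ∀ j ∈ Finset.univ, (0:ℝ) ≤ Complex.normSq ((H * hρ.sqrt) j i) := by
      intro j _; exact Complex.normSq_nonneg _
    have := (Finset.sum_eq_zero_iff_of_nonneg h'').mp this j (Finset.mem_univ j)
    exact Complex.normSq_eq_zero.mp this
  have hN : H * hρ.sqrt = 0 := by ext j i; exact hz j i
  calc H * ρ = (H * hρ.sqrt) * hρ.sqrt := by rw [mul_assoc, hρ.sqrt_mul_self]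
  _ = 0 := by rw [hN, zero_mul]

lemma key_trace (Q R ρ : Matrix n n ℂ) (hQρ : Q * ρ = 0) (hρQ : ρ * Q = 0)
    (hRR : R * R = 1) (htr : ρ.trace = 1) :
    (((Q - R) * (Q - R) - (2:ℂ) • 1) * ρ).trace = -1 := by
  have hexp : (Q - R) * (Q - R) - (2:ℂ) • 1 = Q*Q - Q*R - R*Q + R*R - (2:ℂ) • 1 := by
    noncomm_ring
  have h1 : Q*Q*ρ = 0 := by rw [mul_assoc, hQρ, mul_zero]
  have h2 : R*Q*ρ = 0 := by rw [mul_assoc, hQρ, mul_zero]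
  have h3 : ((Q*R)*ρ).trace = 0 := by
    rw [Matrix.trace_mul_comm, ← mul_assoc, hρQ, zero_mul, Matrix.trace_zero]
  rw [hexp]
  simp only [sub_mul, add_mul, smul_mul_assoc, one_mul, Matrix.trace_sub, Matrix.trace_add,
    Matrix.trace_smul, h1, h2, h3, hRR, Matrix.trace_zero, htr, smul_eq_mul, mul_one]
  ring

end pos

set_option maxHeartbeats 2000000

/-- Self-testing conditions from the optimal quantum Bell value: if
`Re Tr[ℐ ρ] = 6` then `Re Tr[((A₁+A₂+A₃)⊗1)² ρ] = 0` and
`Re Tr[(1⊗(B₁+B₂+B₃))² ρ] = 0`, and consequently the anticommutators of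
distinct observables have expectation `−1` on `ρ`. -/
theorem self_testing_conditions {d₁ d₂ : ℕ}
    (A : Fin 3 → Matrix (Fin d₁) (Fin d₁) ℂ)
    (B : Fin 3 → Matrix (Fin d₂) (Fin d₂) ℂ)
    (hA : ∀ x, (A x).IsHermitian) (hAsq : ∀ x, A x * A x = 1)
    (hB : ∀ y, (B y).IsHermitian) (hBsq : ∀ y, B y * B y = 1)
    (ρ : Matrix (Fin d₁ × Fin d₂) (Fin d₁ × Fin d₂) ℂ)
    (hρ : ρ.PosSemidef) (hρtr : ρ.trace = 1)
    (hopt : ((((A 0 + A 1 - A 2) ⊗ₖ B 0 + (A 0 - A 1 + A 2) ⊗ₖ B 1 +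
        (-A 0 + A 1 + A 2) ⊗ₖ B 2) * ρ).trace).re = 6) :
    (((((A 0 + A 1 + A 2) ⊗ₖ (1 : Matrix (Fin d₂) (Fin d₂) ℂ)) *
        ((A 0 + A 1 + A 2) ⊗ₖ (1 : Matrix (Fin d₂) (Fin d₂) ℂ)) * ρ).trace).re = 0) ∧
    (((((1 : Matrix (Fin d₁) (Fin d₁) ℂ) ⊗ₖ (B 0 + B 1 + B 2)) *
        ((1 : Matrix (Fin d₁) (Fin d₁) ℂ) ⊗ₖ (B 0 + B 1 + B 2)) * ρ).trace).re = 0) ∧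
    (∀ x x' : Fin 3, x ≠ x' →
      ((((A x * A x' + A x' * A x) ⊗ₖ (1 : Matrix (Fin d₂) (Fin d₂) ℂ)) * ρ).trace).re = -1) ∧
    (∀ y y' : Fin 3, y ≠ y' →
      ((((1 : Matrix (Fin d₁) (Fin d₁) ℂ) ⊗ₖ (B y * B y' + B y' * B y)) * ρ).trace).re = -1) := by
  have hρH : ρ.IsHermitian := hρ.1
  set I : Matrix (Fin d₁ × Fin d₂) (Fin d₁ × Fin d₂) ℂ :=
    (A 0 + A 1 - A 2) ⊗ₖ B 0 + (A 0 - A 1 + A 2) ⊗ₖ B 1 +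
      (-A 0 + A 1 + A 2) ⊗ₖ B 2 with hIdef
  set Q : Matrix (Fin d₁ × Fin d₂) (Fin d₁ × Fin d₂) ℂ :=
    (A 0 + A 1 + A 2) ⊗ₖ (1 : Matrix (Fin d₂) (Fin d₂) ℂ) with hQdef
  set QB : Matrix (Fin d₁ × Fin d₂) (Fin d₁ × Fin d₂) ℂ :=
    (1 : Matrix (Fin d₁) (Fin d₁) ℂ) ⊗ₖ (B 0 + B 1 + B 2) with hQBdef
  have hkron : ∀ (X : Matrix (Fin d₁) (Fin d₁) ℂ) (Y : Matrix (Fin d₂) (Fin d₂) ℂ),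
      X.IsHermitian → Y.IsHermitian → (X ⊗ₖ Y).IsHermitian := by
    intro X Y hX hY
    show (X ⊗ₖ Y)ᴴ = X ⊗ₖ Y
    rw [kron_ct, hX.eq, hY.eq]
  have hsm2 : ∀ (M : Matrix (Fin d₁ × Fin d₂) (Fin d₁ × Fin d₂) ℂ), M.IsHermitian →
      ((2:ℂ) • M).IsHermitian := by
    intro M hM
    show ((2:ℂ) • M)ᴴ = (2:ℂ) • M
    rw [Matrix.conjTranspose_smul, hM.eq]
    norm_num
  have hQH : Q.IsHermitian := hkron _ _ (((hA 0).add (hA 1)).add (hA 2)) Matrix.isHermitian_one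
  have hQBH : QB.IsHermitian :=
    hkron _ _ Matrix.isHermitian_one (((hB 0).add (hB 1)).add (hB 2))
  -- Alice-side SOS terms
  set P0 : Matrix (Fin d₁ × Fin d₂) (Fin d₁ × Fin d₂) ℂ :=
    (A 0 + A 1 - A 2) ⊗ₖ (1 : Matrix (Fin d₂) (Fin d₂) ℂ) -
      (2:ℂ) • ((1 : Matrix (Fin d₁) (Fin d₁) ℂ) ⊗ₖ B 0) with hP0def
  set P1 : Matrix (Fin d₁ × Fin d₂) (Fin d₁ × Fin d₂) ℂ :=
    (A 0 - A 1 + A 2) ⊗ₖ (1 : Matrix (Fin d₂) (Fin d₂) ℂ) -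
      (2:ℂ) • ((1 : Matrix (Fin d₁) (Fin d₁) ℂ) ⊗ₖ B 1) with hP1def
  set P2 : Matrix (Fin d₁ × Fin d₂) (Fin d₁ × Fin d₂) ℂ :=
    (-A 0 + A 1 + A 2) ⊗ₖ (1 : Matrix (Fin d₂) (Fin d₂) ℂ) -
      (2:ℂ) • ((1 : Matrix (Fin d₁) (Fin d₁) ℂ) ⊗ₖ B 2) with hP2def
  -- Bob-side SOS terms
  set R0 : Matrix (Fin d₁ × Fin d₂) (Fin d₁ × Fin d₂) ℂ :=
    (2:ℂ) • (A 0 ⊗ₖ (1 : Matrix (Fin d₂) (Fin d₂) ℂ)) -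
      (1 : Matrix (Fin d₁) (Fin d₁) ℂ) ⊗ₖ (B 0 + B 1 - B 2) with hR0def
  set R1 : Matrix (Fin d₁ × Fin d₂) (Fin d₁ × Fin d₂) ℂ :=
    (2:ℂ) • (A 1 ⊗ₖ (1 : Matrix (Fin d₂) (Fin d₂) ℂ)) -
      (1 : Matrix (Fin d₁) (Fin d₁) ℂ) ⊗ₖ (B 0 - B 1 + B 2) with hR1def
  set R2 : Matrix (Fin d₁ × Fin d₂) (Fin d₁ × Fin d₂) ℂ :=
    (2:ℂ) • (A 2 ⊗ₖ (1 : Matrix (Fin d₂) (Fin d₂) ℂ)) -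
      (1 : Matrix (Fin d₁) (Fin d₁) ℂ) ⊗ₖ (-B 0 + B 1 + B 2) with hR2def
  have hP0H : P0.IsHermitian := ((hkron _ _ (((hA 0).add (hA 1)).sub (hA 2))
    Matrix.isHermitian_one).sub (hsm2 _ (hkron _ _ Matrix.isHermitian_one (hB 0))))
  have hP1H : P1.IsHermitian := ((hkron _ _ (((hA 0).sub (hA 1)).add (hA 2))
    Matrix.isHermitian_one).sub (hsm2 _ (hkron _ _ Matrix.isHermitian_one (hB 1))))
  have hP2H : P2.IsHermitian := ((hkron _ _ (((hA 0).neg.add (hA 1)).add (hA 2))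
    Matrix.isHermitian_one).sub (hsm2 _ (hkron _ _ Matrix.isHermitian_one (hB 2))))
  have hR0H : R0.IsHermitian := (hsm2 _ (hkron _ _ (hA 0) Matrix.isHermitian_one)).sub
    (hkron _ _ Matrix.isHermitian_one (((hB 0).add (hB 1)).sub (hB 2)))
  have hR1H : R1.IsHermitian := (hsm2 _ (hkron _ _ (hA 1) Matrix.isHermitian_one)).sub
    (hkron _ _ Matrix.isHermitian_one (((hB 0).sub (hB 1)).add (hB 2)))
  have hR2H : R2.IsHermitian := (hsm2 _ (hkron _ _ (hA 2) Matrix.isHermitian_one)).sub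
    (hkron _ _ Matrix.isHermitian_one (((hB 0).neg.add (hB 1)).add (hB 2)))
  have EA : P0 * P0 + P1 * P1 + P2 * P2 + Q * Q + (4:ℂ) • I
      = (24:ℂ) • (1 : Matrix (Fin d₁ × Fin d₂) (Fin d₁ × Fin d₂) ℂ) := by
    rw [hP0def, hP1def, hP2def, hQdef, hIdef]
    simp only [sub_kron, neg_kron, kron_sub, kron_neg, Matrix.add_kronecker,
      Matrix.kronecker_add, sub_mul, mul_sub, add_mul, mul_add, neg_mul, mul_neg,
      smul_mul_assoc, mul_smul_comm, smul_smul, ← Matrix.mul_kronecker_mul,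
      hAsq, hBsq, Matrix.one_mul, Matrix.mul_one, Matrix.one_kronecker_one,
      smul_add, smul_sub, smul_neg]
    module
  have EB : R0 * R0 + R1 * R1 + R2 * R2 + QB * QB + (4:ℂ) • I
      = (24:ℂ) • (1 : Matrix (Fin d₁ × Fin d₂) (Fin d₁ × Fin d₂) ℂ) := by
    rw [hR0def, hR1def, hR2def, hQBdef, hIdef]
    simp only [sub_kron, neg_kron, kron_sub, kron_neg, Matrix.add_kronecker,
      Matrix.kronecker_add, sub_mul, mul_sub, add_mul, mul_add, neg_mul, mul_neg,
      smul_mul_assoc, mul_smul_comm, smul_smul, ← Matrix.mul_kronecker_mul,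
      hAsq, hBsq, Matrix.one_mul, Matrix.mul_one, Matrix.one_kronecker_one,
      smul_add, smul_sub, smul_neg]
    module
  have tr_of : ∀ M1 M2 M3 M4 : Matrix (Fin d₁ × Fin d₂) (Fin d₁ × Fin d₂) ℂ,
      M1 * M1 + M2 * M2 + M3 * M3 + M4 * M4 + (4:ℂ) • I
        = (24:ℂ) • (1 : Matrix (Fin d₁ × Fin d₂) (Fin d₁ × Fin d₂) ℂ) →
      ((M1 * M1 * ρ).trace).re + ((M2 * M2 * ρ).trace).re + ((M3 * M3 * ρ).trace).re +
        ((M4 * M4 * ρ).trace).re = 0 := by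
    intro M1 M2 M3 M4 hE
    have h := congrArg (fun M => (((M * ρ).trace)).re) hE
    simp only [add_mul, smul_mul_assoc, Matrix.one_mul, Matrix.trace_add, Matrix.trace_smul,
      smul_eq_mul, hρtr, mul_one, Complex.add_re, Complex.mul_re, Complex.re_ofNat,
      Complex.im_ofNat, Complex.one_re, Complex.one_im] at h
    rw [hopt] at h
    linarith
  have hQ0 : ((Q * Q * ρ).trace).re = 0 := by
    have h := tr_of P0 P1 P2 Q EA
    have n1 := trace_HHρ_re_nonneg hP0H hρ
    have n2 := trace_HHρ_re_nonneg hP1H hρ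
    have n3 := trace_HHρ_re_nonneg hP2H hρ
    have n4 := trace_HHρ_re_nonneg hQH hρ
    linarith
  have hQB0 : ((QB * QB * ρ).trace).re = 0 := by
    have h := tr_of R0 R1 R2 QB EB
    have n1 := trace_HHρ_re_nonneg hR0H hρ
    have n2 := trace_HHρ_re_nonneg hR1H hρ
    have n3 := trace_HHρ_re_nonneg hR2H hρ
    have n4 := trace_HHρ_re_nonneg hQBH hρ
    linarith
  have hQρ : Q * ρ = 0 := trace_HHρ_eq_zero hQH hρ hQ0
  have hρQ : ρ * Q = 0 := by
    have h := congrArg Matrix.conjTranspose hQρ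
    rwa [Matrix.conjTranspose_mul, hρH.eq, hQH.eq, Matrix.conjTranspose_zero] at h
  have hQBρ : QB * ρ = 0 := trace_HHρ_eq_zero hQBH hρ hQB0
  have hρQB : ρ * QB = 0 := by
    have h := congrArg Matrix.conjTranspose hQBρ
    rwa [Matrix.conjTranspose_mul, hρH.eq, hQBH.eq, Matrix.conjTranspose_zero] at h
  refine ⟨hQ0, hQB0, ?_, ?_⟩
  · have keyA : ∀ x x' x'' : Fin 3, A x + A x' + A x'' = A 0 + A 1 + A 2 →
        ((((A x * A x' + A x' * A x) ⊗ₖ (1 : Matrix (Fin d₂) (Fin d₂) ℂ)) * ρ).trace).re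
          = -1 := by
      intro x x' x'' hsum
      have hRR : (A x'' ⊗ₖ (1 : Matrix (Fin d₂) (Fin d₂) ℂ)) *
          (A x'' ⊗ₖ (1 : Matrix (Fin d₂) (Fin d₂) ℂ)) = 1 := by
        rw [← Matrix.mul_kronecker_mul, hAsq, Matrix.one_mul, Matrix.one_kronecker_one]
      have hid : (A x * A x' + A x' * A x) ⊗ₖ (1 : Matrix (Fin d₂) (Fin d₂) ℂ)
          = (Q - A x'' ⊗ₖ (1 : Matrix (Fin d₂) (Fin d₂) ℂ)) *
            (Q - A x'' ⊗ₖ (1 : Matrix (Fin d₂) (Fin d₂) ℂ)) - (2:ℂ) • 1 := by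
        rw [hQdef, ← hsum]
        simp only [Matrix.add_kronecker, sub_mul, mul_sub, add_mul, mul_add,
          ← Matrix.mul_kronecker_mul, hAsq, Matrix.one_mul, Matrix.mul_one,
          Matrix.one_kronecker_one]
        module
      rw [hid, key_trace Q (A x'' ⊗ₖ (1 : Matrix (Fin d₂) (Fin d₂) ℂ)) ρ hQρ hρQ hRR hρtr]
      norm_num
    intro x x' hxx
    fin_cases x <;> fin_cases x'
    · exact absurd rfl hxx
    · exact keyA 0 1 2 rfl
    · exact keyA 0 2 1 (by abel)
    · exact keyA 1 0 2 (by abel)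
    · exact absurd rfl hxx
    · exact keyA 1 2 0 (by abel)
    · exact keyA 2 0 1 (by abel)
    · exact keyA 2 1 0 (by abel)
    · exact absurd rfl hxx
  · have keyB : ∀ y y' y'' : Fin 3, B y + B y' + B y'' = B 0 + B 1 + B 2 →
        ((((1 : Matrix (Fin d₁) (Fin d₁) ℂ) ⊗ₖ (B y * B y' + B y' * B y)) * ρ).trace).re
          = -1 := by
      intro y y' y'' hsum
      have hRR : ((1 : Matrix (Fin d₁) (Fin d₁) ℂ) ⊗ₖ B y'') *
          ((1 : Matrix (Fin d₁) (Fin d₁) ℂ) ⊗ₖ B y'') = 1 := by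
        rw [← Matrix.mul_kronecker_mul, hBsq, Matrix.one_mul, Matrix.one_kronecker_one]
      have hid : (1 : Matrix (Fin d₁) (Fin d₁) ℂ) ⊗ₖ (B y * B y' + B y' * B y)
          = (QB - (1 : Matrix (Fin d₁) (Fin d₁) ℂ) ⊗ₖ B y'') *
            (QB - (1 : Matrix (Fin d₁) (Fin d₁) ℂ) ⊗ₖ B y'') - (2:ℂ) • 1 := by
        rw [hQBdef, ← hsum]
        simp only [Matrix.kronecker_add, sub_mul, mul_sub, add_mul, mul_add,
          ← Matrix.mul_kronecker_mul, hBsq, Matrix.one_mul, Matrix.mul_one,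
          Matrix.one_kronecker_one]
        module
      rw [hid, key_trace QB ((1 : Matrix (Fin d₁) (Fin d₁) ℂ) ⊗ₖ B y'') ρ hQBρ hρQB hRR hρtr]
      norm_num
    intro y y' hyy
    fin_cases y <;> fin_cases y'
    · exact absurd rfl hyy
    · exact keyB 0 1 2 rfl
    · exact keyB 0 2 1 (by abel)
    · exact keyB 1 0 2 (by abel)
    · exact absurd rfl hyy
    · exact keyB 1 2 0 (by abel)
    · exact keyB 2 0 1 (by abel)
    · exact keyB 2 1 0 (by abel)
    · exact absurd rfl hyy
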